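/- For all n ≥ 1, u_r(n,1) = (-1)^{n-1} · (Π_{l=0}^{n-1}(l²+r)) · (Σ_{i=0}^{n-1} 1/(r+i²)), as an identity of rational numbers (with r ≥ 1, or interpreting the i=0 term via r > 0; equivalently u_r(n,1) = (-1)^{n-1} Σ_{i=0}^{n-1} Π_{l=0, l≠i}^{n-1}(l²+r)). -/

import Mathlib

/-- `centralu r n k` is the r-central factorial number with even indices of the first kind. -/
def centralu (r : ℕ) : ℕ → ℕ → ℤ
  | 0, 0 => 1
  | 0, _ + 1 => 0
  | n + 1, 0 => (-1) ^ (n + 1) * ∏ i ∈ Finset.range (n + 1), ((i : ℤ) ^ 2 + r)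
  | n + 1, k + 1 => centralu r n k - ((n : ℤ) ^ 2 + r) * centralu r n (k + 1)

lemma centralu_zero (r n : ℕ) :
    centralu r n 0 = (-1) ^ n * ∏ i ∈ Finset.range n, ((i : ℤ) ^ 2 + r) := by
  cases n with
  | zero => simp [centralu]
  | succ m => rfl

theorem centralu_one (r n : ℕ) (hr : 1 ≤ r) (hn : 1 ≤ n) :
    (centralu r n 1 : ℚ) =
      (-1) ^ (n - 1) * (∏ l ∈ Finset.range n, ((l : ℚ) ^ 2 + r)) *
        ∑ i ∈ Finset.range n, 1 / ((r : ℚ) + (i : ℚ) ^ 2) := by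
  have hr0 : (r : ℚ) ≠ 0 := by positivity
  have hne : ∀ i : ℕ, (r : ℚ) + (i : ℚ) ^ 2 ≠ 0 := fun i => by positivity
  induction n, hn using Nat.le_induction with
  | base =>
    simp only [centralu, Finset.prod_range_one, Finset.sum_range_one]
    push_cast
    field_simp
    ring
  | succ n hn ih =>
    obtain ⟨m, rfl⟩ := Nat.exists_eq_add_of_le hn
    have key : centralu r (1 + m + 1) 1 =
        centralu r (1 + m) 0 - (((1 + m : ℕ) : ℤ) ^ 2 + r) * centralu r (1 + m) 1 := rfl
    rw [key, centralu_zero]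
    push_cast
    rw [ih]
    rw [Finset.prod_range_succ, Finset.sum_range_succ]
    have h1 : 1 + m + 1 - 1 = m + 1 := by omega
    have h2 : 1 + m - 1 = m := by omega
    rw [h2]
    have hc := hne (1 + m)
    push_cast at hc ⊢
    field_simp
    ring
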